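/- Let X be a locally compact Hausdorff space, A = C_b(X) the C*-algebra of bounded continuous functions, and M = C₀(X) viewed as a Hilbert A-module with inner product ⟨f, g⟩ = f̄ g. Then the dual module M' is isomorphic to C_b(X): every bounded anti-A-linear functional φ : C₀(X) → C_b(X) is of the form φ(f) = f̄ h for a unique h ∈ C_b(X), with ‖φ‖ = ‖h‖. -/

import Mathlib

open ZeroAtInfty BoundedContinuousFunction Set in
/-- A bump function: a `C₀` function equal to `1` near `x`, vanishing outside `U`,
with values of norm at most `1`. -/
lemma statement7_bump (X : Type*) [TopologicalSpace X] [LocallyCompactSpace X] [T2Space X]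
    {U : Set X} (hU : IsOpen U) {x : X} (hx : x ∈ U) :
    ∃ e : C₀(X, ℂ), (∀ᶠ y in nhds x, e y = 1) ∧ (∀ y, y ∉ U → e y = 0) ∧ ∀ y, ‖e y‖ ≤ 1 := by
  obtain ⟨K, hK, hxK, hKU⟩ := exists_compact_subset hU hx
  obtain ⟨f, hf1, hf0, hfc, hf01⟩ := exists_continuous_one_zero_of_isCompact hK
    hU.isClosed_compl (disjoint_compl_right_iff_subset.mpr hKU)
  refine ⟨⟨⟨fun y => (f y : ℂ), by fun_prop⟩, ?_⟩, ?_, ?_, ?_⟩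
  · simpa [Function.comp_def] using (Complex.continuous_ofReal.tendsto 0).comp hfc.is_zero_at_infty
  · filter_upwards [mem_interior_iff_mem_nhds.mp hxK] with y hy
    simp [hf1 hy]
  · intro y hy
    simp [hf0 (Set.mem_compl hy)]
  · intro y
    have := hf01 y
    simp only [ZeroAtInftyContinuousMap.coe_mk, ContinuousMap.coe_mk, Complex.norm_real,
      Real.norm_eq_abs]
    rw [abs_le]
    constructor <;> linarith [this.1, this.2]

open ZeroAtInfty BoundedContinuousFunction in
/-- For a locally compact Hausdorff (σ-compact) space `X`, the dual of the
Hilbert `C_b(X)`-module `M = C₀(X)` is `C_b(X)`: every bounded anti-`C_b(X)`-linear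
functional `φ : C₀(X) → C_b(X)` is of the form `φ(f) = f̄ h` for a unique `h ∈ C_b(X)`,
and `‖φ‖ = ‖h‖`. -/
theorem statement7 (X : Type*) [TopologicalSpace X] [LocallyCompactSpace X] [T2Space X]
    [SigmaCompactSpace X]
    (φ : C₀(X, ℂ) → (X →ᵇ ℂ))
    (hadd : ∀ f g : C₀(X, ℂ), φ (f + g) = φ f + φ g)
    (hmod : ∀ (f h : C₀(X, ℂ)) (g : X →ᵇ ℂ), (∀ x, h x = f x * g x) → φ h = star g * φ f)
    (hc : ∀ (z : ℂ) (f : C₀(X, ℂ)), φ (z • f) = star z • φ f)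
    (hbd : ∃ C : ℝ, ∀ f : C₀(X, ℂ), ‖φ f‖ ≤ C * ‖f‖) :
    ∃! h : X →ᵇ ℂ,
      (∀ (f : C₀(X, ℂ)) (x : X), φ f x = star (f x) * h x) ∧
      sSup ((fun f => ‖φ f‖) '' {f : C₀(X, ℂ) | ‖f‖ ≤ 1}) = ‖h‖ := by
  classical
  obtain ⟨C₁, hC₁⟩ := hbd
  set C : ℝ := max C₁ 0 with hC
  have hC0 : 0 ≤ C := le_max_right _ _
  have hCbd : ∀ f : C₀(X, ℂ), ‖φ f‖ ≤ C * ‖f‖ := fun f =>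
    (hC₁ f).trans (mul_le_mul_of_nonneg_right (le_max_left _ _) (norm_nonneg f))
  -- choose bumps
  have hbump := fun x : X => statement7_bump X isOpen_univ (Set.mem_univ x)
  choose e he1 _ heN using hbump
  -- norms of bumps are at most 1
  have heNorm : ∀ x, ‖e x‖ ≤ 1 := by
    intro x
    rw [← ZeroAtInftyContinuousMap.norm_toBCF_eq_norm]
    exact (BoundedContinuousFunction.norm_le zero_le_one).2 (heN x)
  -- key algebraic relation
  have key : ∀ (f d : C₀(X, ℂ)), (∀ y, d y ≠ 0 → f y = 1) →
      φ d = star (d.toBCF) * φ f := by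
    intro f d hd
    apply hmod f d d.toBCF
    intro y
    by_cases hy : d y = 0
    · simp [hy]
    · simp [hd y hy]
  set h₀ : X → ℂ := fun x => φ (e x) x with hh₀
  -- well-definedness: any function equal to 1 near x computes h₀ x
  have welldef : ∀ (f : C₀(X, ℂ)) (x : X), (∀ᶠ y in nhds x, f y = 1) → φ f x = h₀ x := by
    intro f x hf
    obtain ⟨O, hOsub, hOopen, hxO⟩ := mem_nhds_iff.mp (Filter.inter_mem hf (he1 x))
    obtain ⟨d, hd1, hd0, _⟩ := statement7_bump X hOopen hxO
    have hdx : d x = 1 := hd1.self_of_nhds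
    have h1 : φ d = star (d.toBCF) * φ f := by
      apply key
      intro y hy
      by_contra hne
      exact hy (hd0 y (fun hyO => hne (hOsub hyO).1))
    have h2 : φ d = star (d.toBCF) * φ (e x) := by
      apply key
      intro y hy
      by_contra hne
      exact hy (hd0 y (fun hyO => hne (hOsub hyO).2))
    have e1 : φ d x = star (d x) * φ f x := by rw [h1]; simp
    have e2 : φ d x = star (d x) * φ (e x) x := by rw [h2]; simp
    rw [hdx] at e1 e2
    simp only [star_one, one_mul] at e1 e2
    rw [← e1, e2]
  -- the main formula
  have formula : ∀ (f : C₀(X, ℂ)) (x : X), φ f x = star (f x) * h₀ x := by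
    intro f x
    have hp1 : φ (e x * f) = star (f.toBCF) * φ (e x) := by
      apply hmod (e x) (e x * f) f.toBCF
      intro y; rfl
    have hp2 : φ (e x * f) = star ((e x).toBCF) * φ f := by
      apply hmod f (e x * f) (e x).toBCF
      intro y
      exact mul_comm _ _
    have hex : e x x = 1 := (he1 x).self_of_nhds
    have e1 : star (f x) * φ (e x) x = φ (e x * f) x := by rw [hp1]; simp
    have e2 : φ (e x * f) x = star (e x x) * φ f x := by rw [hp2]; simp
    rw [hex] at e2
    simp only [star_one, one_mul] at e2
    rw [← e2, ← e1]
  -- continuity of h₀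
  have hcont : Continuous h₀ := by
    rw [continuous_iff_continuousAt]
    intro x
    obtain ⟨O, hOsub, hOopen, hxO⟩ := mem_nhds_iff.mp (he1 x)
    have heq : ∀ y ∈ O, (φ (e x)) y = h₀ y := by
      intro y hy
      exact welldef (e x) y (Filter.eventually_of_mem (hOopen.mem_nhds hy)
        (fun z hz => hOsub hz))
    exact ((φ (e x)).continuous.continuousAt).congr
      (Filter.eventuallyEq_of_mem (hOopen.mem_nhds hxO) (fun y hy => heq y hy))
  -- boundedness of h₀
  have hbound : ∀ x, ‖h₀ x‖ ≤ C := by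
    intro x
    calc ‖h₀ x‖ = ‖φ (e x) x‖ := rfl
      _ ≤ ‖φ (e x)‖ := (φ (e x)).norm_coe_le_norm x
      _ ≤ C * ‖e x‖ := hCbd (e x)
      _ ≤ C * 1 := mul_le_mul_of_nonneg_left (heNorm x) hC0
      _ = C := mul_one C
  set h : X →ᵇ ℂ :=
    BoundedContinuousFunction.ofNormedAddCommGroup h₀ hcont C hbound with hhdef
  have hcoe : ∀ x, h x = h₀ x := fun x => rfl
  have hform : ∀ (f : C₀(X, ℂ)) (x : X), φ f x = star (f x) * h x := by
    intro f x; rw [hcoe]; exact formula f x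
  -- the norm statement
  set S : Set ℝ := (fun f => ‖φ f‖) '' {f : C₀(X, ℂ) | ‖f‖ ≤ 1} with hS
  have hSub : ∀ a ∈ S, a ≤ ‖h‖ := by
    rintro a ⟨f, hf, rfl⟩
    refine (BoundedContinuousFunction.norm_le (norm_nonneg h)).2 (fun x => ?_)
    rw [hform f x]
    calc ‖star (f x) * h x‖ = ‖f x‖ * ‖h x‖ := by rw [norm_mul, norm_star]
      _ ≤ 1 * ‖h‖ := by
          apply mul_le_mul _ (h.norm_coe_le_norm x) (norm_nonneg _) zero_le_one
          calc ‖f x‖ = ‖f.toBCF x‖ := rfl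
            _ ≤ ‖f.toBCF‖ := f.toBCF.norm_coe_le_norm x
            _ = ‖f‖ := ZeroAtInftyContinuousMap.norm_toBCF_eq_norm
            _ ≤ 1 := hf
      _ = ‖h‖ := one_mul _
  have hBdd : BddAbove S := ⟨‖h‖, hSub⟩
  have hmemS : ∀ x, ‖φ (e x)‖ ∈ S := fun x => ⟨e x, heNorm x, rfl⟩
  have hnorm : sSup S = ‖h‖ := by
    apply le_antisymm
    · exact Real.sSup_le hSub (norm_nonneg h)
    · have h0S : (0 : ℝ) ≤ sSup S := by
        have hφ0 : φ 0 = 0 := by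
          have := hadd 0 0
          simp only [add_zero] at this
          exact (left_eq_add.mp this)
        have : (0 : ℝ) ∈ S := ⟨0, by simp, by simp [hφ0]⟩
        exact le_csSup hBdd this
      refine (BoundedContinuousFunction.norm_le h0S).2 (fun x => ?_)
      calc ‖h x‖ = ‖φ (e x) x‖ := by rw [hcoe]
        _ ≤ ‖φ (e x)‖ := (φ (e x)).norm_coe_le_norm x
        _ ≤ sSup S := le_csSup hBdd (hmemS x)
  refine ⟨h, ⟨hform, hnorm⟩, ?_⟩
  rintro h' ⟨hform', _⟩
  ext x
  have hex : e x x = 1 := (he1 x).self_of_nhds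
  have e1 := hform' (e x) x
  have e2 := hform (e x) x
  rw [hex] at e1 e2
  simp only [star_one, one_mul] at e1 e2
  rw [← e1, e2]
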